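/- arXiv:1307.2113 — 4 statements merged into one kernel-verified Lean document; each statement's English description precedes it below -/
import Mathlib

section
/- Every 2×2 complex matrix A with Aᴴ A = I whose entries all lie in the Gaussian integers Z[i] is a finite product of the matrices U₁ = [(0,1),(1,0)] and U₂ = [(i,0),(0,1)] and their inverses. That is, the group U(2;Z[i]) is generated by U₁ and U₂. -/
open Matrix Complex

/-- A complex number is a Gaussian integer. -/
def IsGaussInt (z : ℂ) : Prop := ∃ a b : ℤ, z = (a : ℂ) + (b : ℂ) * Complex.I

noncomputable def Umat₁ : Matrix (Fin 2) (Fin 2) ℂ := !![0, 1; 1, 0]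

noncomputable def Umat₂ : Matrix (Fin 2) (Fin 2) ℂ := !![Complex.I, 0; 0, 1]

/- ### Auxiliary material -/

lemma gaussNormSq (z : ℂ) (h : IsGaussInt z) :
    ∃ n : ℕ, Complex.normSq z = n := by
  obtain ⟨a, b, rfl⟩ := h
  refine ⟨(a^2+b^2).toNat, ?_⟩
  have h1 : Complex.normSq ((a:ℂ) + (b:ℂ)*Complex.I) = (a:ℝ)^2 + (b:ℝ)^2 := by
    rw [show ((a:ℂ) + (b:ℂ)*Complex.I) = Complex.mk (a:ℝ) (b:ℝ) by
      simp [Complex.mk_eq_add_mul_I]]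
    simp [Complex.normSq_mk]; ring
  have h2 : (0:ℤ) ≤ a^2 + b^2 := by positivity
  have h3 : (((a^2+b^2).toNat : ℤ) : ℝ) = ((a^2+b^2 : ℤ) : ℝ) := by
    rw [Int.toNat_of_nonneg h2]
  rw [h1]
  push_cast at h3 ⊢
  linarith

lemma gaussUnit (z : ℂ) (h : IsGaussInt z)
    (h1 : Complex.normSq z = 1) : ∃ n : ℕ, z = Complex.I ^ n := by
  obtain ⟨a, b, rfl⟩ := h
  have hn : Complex.normSq ((a:ℂ) + (b:ℂ)*Complex.I) = (a:ℝ)^2 + (b:ℝ)^2 := by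
    rw [show ((a:ℂ) + (b:ℂ)*Complex.I) = Complex.mk (a:ℝ) (b:ℝ) by
      simp [Complex.mk_eq_add_mul_I]]
    simp [Complex.normSq_mk]; ring
  rw [hn] at h1
  have hz : a^2 + b^2 = 1 := by exact_mod_cast h1
  have ha1 : -1 ≤ a := by nlinarith [sq_nonneg b, sq_nonneg (a+1)]
  have ha2 : a ≤ 1 := by nlinarith [sq_nonneg b, sq_nonneg (a-1)]
  have hb1 : -1 ≤ b := by nlinarith [sq_nonneg a, sq_nonneg (b+1)]
  have hb2 : b ≤ 1 := by nlinarith [sq_nonneg a, sq_nonneg (b-1)]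
  have e0 : (1:ℂ) = Complex.I ^ 0 := by norm_num
  have e1 : Complex.I = Complex.I ^ 1 := by norm_num
  have e2 : (-1 : ℂ) = Complex.I ^ 2 := by simp [pow_two]
  have e3 : (-Complex.I : ℂ) = Complex.I ^ 3 := by
    rw [pow_succ]; simp [pow_two]
  interval_cases a <;> interval_cases b <;> simp at hz <;> norm_num <;>
    first
      | exact ⟨2, e2⟩
      | exact ⟨3, e3⟩
      | exact ⟨1, e1⟩
      | exact ⟨0, e0⟩

lemma colCases (z w : ℂ) (hz : IsGaussInt z) (hw : IsGaussInt w)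
    (h : Complex.normSq z + Complex.normSq w = 1) :
    (z = 0 ∧ Complex.normSq w = 1) ∨ (Complex.normSq z = 1 ∧ w = 0) := by
  obtain ⟨n, hn⟩ := gaussNormSq z hz
  obtain ⟨m, hm⟩ := gaussNormSq w hw
  have hnm : n + m = 1 := by
    have : ((n + m : ℕ) : ℝ) = 1 := by push_cast; rw [← hn, ← hm]; exact h
    exact_mod_cast this
  rcases Nat.le_one_iff_eq_zero_or_eq_one.mp (by omega : n ≤ 1) with h' | h'
  · left
    have hm1 : m = 1 := by omega
    refine ⟨Complex.normSq_eq_zero.mp (by rw [hn, h']; norm_num), by rw [hm, hm1]; norm_num⟩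
  · right
    have hm0 : m = 0 := by omega
    refine ⟨by rw [hn, h']; norm_num, Complex.normSq_eq_zero.mp (by rw [hm, hm0]; norm_num)⟩

lemma U1_mul_U1 : Umat₁ * Umat₁ = 1 := by
  simp [Umat₁, Matrix.mul_fin_two, Matrix.one_fin_two]

lemma U2_mul_inv : Umat₂ * !![-Complex.I, 0; 0, 1] = 1 := by
  simp [Umat₂, Matrix.mul_fin_two, Matrix.one_fin_two]

lemma inv_mul_U2 : !![-Complex.I, 0; 0, 1] * Umat₂ = 1 := by
  simp [Umat₂, Matrix.mul_fin_two, Matrix.one_fin_two]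

noncomputable def gU1 : GL (Fin 2) ℂ := ⟨Umat₁, Umat₁, U1_mul_U1, U1_mul_U1⟩
noncomputable def gU2 : GL (Fin 2) ℂ :=
  ⟨Umat₂, !![-Complex.I, 0; 0, 1], U2_mul_inv, inv_mul_U2⟩
noncomputable def gU3 : GL (Fin 2) ℂ := gU1 * gU2 * gU1

lemma gU2_pow (n : ℕ) : ((gU2 ^ n : GL (Fin 2) ℂ) : Matrix (Fin 2) (Fin 2) ℂ)
    = !![Complex.I ^ n, 0; 0, 1] := by
  induction n with
  | zero => simp [Matrix.one_fin_two]
  | succ k ih =>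
    rw [pow_succ]
    show ((gU2 ^ k : GL (Fin 2) ℂ) : Matrix (Fin 2) (Fin 2) ℂ)
      * (gU2 : Matrix (Fin 2) (Fin 2) ℂ) = _
    rw [ih]
    simp [gU2, Umat₂, Matrix.mul_fin_two, pow_succ]

lemma gU3_coe : (gU3 : Matrix (Fin 2) (Fin 2) ℂ) = !![1, 0; 0, Complex.I] := by
  show (Umat₁ * Umat₂ * Umat₁ : Matrix (Fin 2) (Fin 2) ℂ) = _
  simp [Umat₁, Umat₂, Matrix.mul_fin_two]

lemma gU3_pow (n : ℕ) : ((gU3 ^ n : GL (Fin 2) ℂ) : Matrix (Fin 2) (Fin 2) ℂ)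
    = !![1, 0; 0, Complex.I ^ n] := by
  induction n with
  | zero => simp [Matrix.one_fin_two]
  | succ k ih =>
    rw [pow_succ]
    show ((gU3 ^ k : GL (Fin 2) ℂ) : Matrix (Fin 2) (Fin 2) ℂ)
      * (gU3 : Matrix (Fin 2) (Fin 2) ℂ) = _
    rw [ih, gU3_coe]
    simp [Matrix.mul_fin_two, pow_succ]

/-- The group `U(2; ℤ[i])` of 2×2 unitary matrices with Gaussian integer
entries is generated by `U₁ = [(0,1),(1,0)]` and `U₂ = [(i,0),(0,1)]`. -/
theorem unitary_gauss_int_generated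
    (A : Matrix (Fin 2) (Fin 2) ℂ)
    (hA : Aᴴ * A = 1)
    (hint : ∀ j k, IsGaussInt (A j k)) :
    ∃ g ∈ Subgroup.closure
      {g : GL (Fin 2) ℂ | (g : Matrix (Fin 2) (Fin 2) ℂ) = Umat₁ ∨
        (g : Matrix (Fin 2) (Fin 2) ℂ) = Umat₂},
      (g : Matrix (Fin 2) (Fin 2) ℂ) = A := by
  set S : Set (GL (Fin 2) ℂ) :=
    {g : GL (Fin 2) ℂ | (g : Matrix (Fin 2) (Fin 2) ℂ) = Umat₁ ∨
      (g : Matrix (Fin 2) (Fin 2) ℂ) = Umat₂} with hS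
  have hg1 : gU1 ∈ Subgroup.closure S := Subgroup.subset_closure (Or.inl rfl)
  have hg2 : gU2 ∈ Subgroup.closure S := Subgroup.subset_closure (Or.inr rfl)
  have hg3 : gU3 ∈ Subgroup.closure S := mul_mem (mul_mem hg1 hg2) hg1
  -- orthonormality relations
  have h0 := congrFun (congrFun hA 0) 0
  have h1 := congrFun (congrFun hA 1) 1
  have h2 := congrFun (congrFun hA 0) 1
  simp [Matrix.mul_apply, Fin.sum_univ_two, Matrix.conjTranspose_apply,
    Matrix.one_apply] at h0 h1 h2
  have nsq0 : Complex.normSq (A 0 0) + Complex.normSq (A 1 0) = 1 := by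
    have : ((Complex.normSq (A 0 0) + Complex.normSq (A 1 0) : ℝ) : ℂ) = 1 := by
      push_cast
      rw [← Complex.normSq_eq_conj_mul_self, ← Complex.normSq_eq_conj_mul_self] at h0
      exact_mod_cast h0
    exact_mod_cast this
  have nsq1 : Complex.normSq (A 0 1) + Complex.normSq (A 1 1) = 1 := by
    have : ((Complex.normSq (A 0 1) + Complex.normSq (A 1 1) : ℝ) : ℂ) = 1 := by
      push_cast
      rw [← Complex.normSq_eq_conj_mul_self, ← Complex.normSq_eq_conj_mul_self] at h1
      exact_mod_cast h1
    exact_mod_cast this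
  have col0 := colCases _ _ (hint 0 0) (hint 1 0) nsq0
  have col1 := colCases _ _ (hint 0 1) (hint 1 1) nsq1
  rcases col0 with ⟨hz00, hu10⟩ | ⟨hu00, hz10⟩
  · rcases col1 with ⟨hz01, hu11⟩ | ⟨hu01, hz11⟩
    · -- both columns supported at row 1 : contradiction with orthogonality
      exfalso
      rw [hz00, hz01] at h2
      simp at h2
      rcases h2 with h2 | h2
      · rw [h2] at hu10; simp at hu10
      · rw [h2] at hu11; simp at hu11
    · -- antidiagonal case
      obtain ⟨a, ha⟩ := gaussUnit _ (hint 0 1) hu01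
      obtain ⟨b, hb⟩ := gaussUnit _ (hint 1 0) hu10
      refine ⟨gU2 ^ a * gU3 ^ b * gU1,
        mul_mem (mul_mem (pow_mem hg2 a) (pow_mem hg3 b)) hg1, ?_⟩
      have hAeq : A = !![0, Complex.I ^ a; Complex.I ^ b, 0] := by
        ext i j
        fin_cases i <;> fin_cases j <;>
          simp [hz00, hz11, ha, hb]
      show ((gU2 ^ a : GL (Fin 2) ℂ) : Matrix (Fin 2) (Fin 2) ℂ)
        * ((gU3 ^ b : GL (Fin 2) ℂ) : Matrix (Fin 2) (Fin 2) ℂ)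
        * ((gU1 : GL (Fin 2) ℂ) : Matrix (Fin 2) (Fin 2) ℂ) = A
      rw [gU2_pow, gU3_pow, hAeq]
      show _ * _ * Umat₁ = _
      simp [Umat₁, Matrix.mul_fin_two]
  · rcases col1 with ⟨hz01, hu11⟩ | ⟨hu01, hz11⟩
    · -- diagonal case
      obtain ⟨a, ha⟩ := gaussUnit _ (hint 0 0) hu00
      obtain ⟨b, hb⟩ := gaussUnit _ (hint 1 1) hu11
      refine ⟨gU2 ^ a * gU3 ^ b,
        mul_mem (pow_mem hg2 a) (pow_mem hg3 b), ?_⟩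
      have hAeq : A = !![Complex.I ^ a, 0; 0, Complex.I ^ b] := by
        ext i j
        fin_cases i <;> fin_cases j <;>
          simp [hz10, hz01, ha, hb]
      show ((gU2 ^ a : GL (Fin 2) ℂ) : Matrix (Fin 2) (Fin 2) ℂ)
        * ((gU3 ^ b : GL (Fin 2) ℂ) : Matrix (Fin 2) (Fin 2) ℂ) = A
      rw [gU2_pow, gU3_pow, hAeq]
      simp [Matrix.mul_fin_two]
    · -- both columns supported at row 0 : contradiction
      exfalso
      rw [hz10, hz11] at h2
      simp at h2
      rcases h2 with h2 | h2
      · rw [h2] at hu00; simp at hu00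
      · rw [h2] at hu01; simp at hu01
end

section
/- Let r > 0 be a real number, t a real number, τ₁, τ₂ complex numbers, and U = (u_{jk}) a 2×2 complex matrix with Uᴴ U = I. Let P be the 4×4 matrix with rows (r, −(τ̄₁u₁₁+τ̄₂u₂₁), −(τ̄₁u₁₂+τ̄₂u₂₂), (−|τ₁|²−|τ₂|²+it)/(2r)), (0, u₁₁, u₁₂, τ₁/r), (0, u₂₁, u₂₂, τ₂/r), (0, 0, 0, 1/r). Then all sixteen entries of P lie in the Gaussian integers Z[i] if and only if r = 1, t is an even integer, τ₁ and τ₂ lie in Z[i] with |τ₁|² + |τ₂|² an even integer, and all four entries of U lie in Z[i]. -/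
open Matrix Complex

lemma gi_def (z : ℂ) : IsGaussInt z ↔ (∃ a : ℤ, z.re = a) ∧ (∃ b : ℤ, z.im = b) := by
  constructor
  · rintro ⟨a, b, rfl⟩
    exact ⟨⟨a, by simp⟩, ⟨b, by simp⟩⟩
  · rintro ⟨⟨a, ha⟩, ⟨b, hb⟩⟩
    exact ⟨a, b, by simp [Complex.ext_iff, ha, hb]⟩

lemma gi_add {z w : ℂ} (hz : IsGaussInt z) (hw : IsGaussInt w) : IsGaussInt (z + w) := by
  obtain ⟨a, b, rfl⟩ := hz; obtain ⟨c, d, rfl⟩ := hw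
  exact ⟨a + c, b + d, by push_cast; ring⟩

lemma gi_mul {z w : ℂ} (hz : IsGaussInt z) (hw : IsGaussInt w) : IsGaussInt (z * w) := by
  obtain ⟨a, b, rfl⟩ := hz; obtain ⟨c, d, rfl⟩ := hw
  exact ⟨a * c - b * d, a * d + b * c, by push_cast; linear_combination ((b : ℂ) * d) * Complex.I_sq⟩

lemma gi_neg {z : ℂ} (hz : IsGaussInt z) : IsGaussInt (-z) := by
  obtain ⟨a, b, rfl⟩ := hz; exact ⟨-a, -b, by push_cast; ring⟩

lemma gi_conj {z : ℂ} (hz : IsGaussInt z) : IsGaussInt ((starRingEnd ℂ) z) := by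
  obtain ⟨a, b, rfl⟩ := hz
  exact ⟨a, -b, by simp [Complex.ext_iff]⟩


/-- An element `P = N_{(τ,t)} A_r M_U` of the stabilizer of infinity in `U(3,1)`
has all entries in `ℤ[i]` if and only if `r = 1`, `t` is an even integer,
`τ₁, τ₂ ∈ ℤ[i]` with `|τ₁|² + |τ₂|²` an even integer, and `U` has entries
in `ℤ[i]`. -/
theorem langlands_integral_iff
    (r : ℝ) (hr : 0 < r) (t : ℝ) (τ₁ τ₂ : ℂ)
    (U : Matrix (Fin 2) (Fin 2) ℂ) (hU : Uᴴ * U = 1) :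
    (∀ j k, IsGaussInt
      ((!![(r : ℂ),
           -((starRingEnd ℂ) τ₁ * U 0 0 + (starRingEnd ℂ) τ₂ * U 1 0),
           -((starRingEnd ℂ) τ₁ * U 0 1 + (starRingEnd ℂ) τ₂ * U 1 1),
           (-(‖τ₁‖ : ℂ) ^ 2 - (‖τ₂‖ : ℂ) ^ 2 +
             Complex.I * (t : ℂ)) / (2 * (r : ℂ));
         0, U 0 0, U 0 1, τ₁ / (r : ℂ);
         0, U 1 0, U 1 1, τ₂ / (r : ℂ);
         0, 0, 0, 1 / (r : ℂ)] : Matrix (Fin 4) (Fin 4) ℂ) j k)) ↔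
    (r = 1 ∧ (∃ m : ℤ, t = 2 * m) ∧ IsGaussInt τ₁ ∧ IsGaussInt τ₂ ∧
      (∃ m : ℤ, ‖τ₁‖ ^ 2 + ‖τ₂‖ ^ 2 = 2 * m) ∧
      ∀ j k, IsGaussInt (U j k)) := by
  constructor
  · intro h
    -- r = 1
    have h00 : IsGaussInt (r : ℂ) := by simpa using h 0 0
    have h33 : IsGaussInt (1 / (r : ℂ)) := by simpa using h 3 3
    rw [gi_def] at h00 h33
    obtain ⟨⟨a, ha⟩, -⟩ := h00
    obtain ⟨⟨c, hc⟩, -⟩ := h33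
    simp only [Complex.ofReal_re] at ha
    have hcre : (1 / (r : ℂ)).re = 1 / r := by
      rw [← Complex.ofReal_one, ← Complex.ofReal_div, Complex.ofReal_re]
    rw [hcre] at hc
    have hac : (a : ℝ) * c = 1 := by
      rw [← ha, ← hc]; field_simp
    have hacZ : a * c = 1 := by exact_mod_cast hac
    have hapos : 0 < a := by exact_mod_cast ha ▸ hr
    have ha1 : a = 1 := by
      rcases Int.eq_one_or_neg_one_of_mul_eq_one hacZ with h1 | h1
      · exact h1
      · omega
    have hr1 : r = 1 := by rw [ha, ha1]; norm_num
    subst hr1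
    -- τ's and U entries
    have hτ1 : IsGaussInt τ₁ := by simpa using h 1 3
    have hτ2 : IsGaussInt τ₂ := by simpa using h 2 3
    have hUg : ∀ j k : Fin 2, IsGaussInt (U j k) := by
      intro j k
      fin_cases j <;> fin_cases k
      · simpa using h 1 1
      · simpa using h 1 2
      · simpa using h 2 1
      · simpa using h 2 2
    -- entry (0,3)
    have h03 : IsGaussInt ((-(‖τ₁‖ : ℂ) ^ 2 - (‖τ₂‖ : ℂ) ^ 2 +
        Complex.I * (t : ℂ)) / 2) := by simpa using h 0 3
    obtain ⟨p, q, hpq⟩ := h03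
    have hw : -(‖τ₁‖ : ℂ) ^ 2 - (‖τ₂‖ : ℂ) ^ 2 + Complex.I * (t : ℂ)
        = 2 * ((p : ℂ) + (q : ℂ) * Complex.I) := by
      field_simp at hpq
      linear_combination hpq
    have hre := congrArg Complex.re hw
    have him := congrArg Complex.im hw
    simp [← Complex.ofReal_pow, Complex.add_re, Complex.add_im, Complex.mul_re, Complex.mul_im] at hre him
    refine ⟨rfl, ⟨q, by linarith⟩, hτ1, hτ2, ⟨-p, by push_cast; linarith⟩, hUg⟩
  · rintro ⟨rfl, ⟨m, ht⟩, hτ1, hτ2, ⟨n, hs⟩, hUg⟩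
    intro j k
    have g0 : IsGaussInt 0 := ⟨0, 0, by simp⟩
    have g1 : IsGaussInt 1 := ⟨1, 0, by simp⟩
    fin_cases j <;> fin_cases k <;>
      simp only [Matrix.cons_val_zero, Matrix.cons_val_one, Matrix.head_cons,
        Matrix.cons_val', Matrix.cons_val_fin_one, Matrix.empty_val',
        Matrix.head_fin_const, Matrix.of_apply, Fin.mk_zero, Fin.mk_one,
        Complex.ofReal_one, div_one, one_div, inv_one]
    · exact g1
    · exact gi_neg (gi_add (gi_mul (gi_conj hτ1) (hUg 0 0)) (gi_mul (gi_conj hτ2) (hUg 1 0)))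
    · exact gi_neg (gi_add (gi_mul (gi_conj hτ1) (hUg 0 1)) (gi_mul (gi_conj hτ2) (hUg 1 1)))
    · refine ⟨-n, m, ?_⟩
      have hsC : ((‖τ₁‖ : ℝ) : ℂ) ^ 2 + ((‖τ₂‖ : ℝ) : ℂ) ^ 2 = 2 * n := by
        exact_mod_cast congrArg (fun x : ℝ => (x : ℂ)) hs
      have htC : (t : ℂ) = 2 * m := by exact_mod_cast congrArg (fun x : ℝ => (x : ℂ)) ht
      rw [htC]
      push_cast
      field_simp
      linear_combination -hsC
    · exact g0
    · exact hUg 0 0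
    · exact hUg 0 1
    · exact hτ1
    · exact g0
    · exact hUg 1 0
    · exact hUg 1 1
    · exact hτ2
    · exact g0
    · exact g0
    · exact g0
    · exact g1
end

section
/- Let ξ₁, ξ₂ be complex numbers and t ∈ [−1,1] a real number. If ξ₂ ∈ S₂ and ξ₁ ∈ Δ (or symmetrically ξ₁ ∈ S₂ and ξ₂ ∈ Δ), then | |ξ₁|² + |ξ₂|² + it | < 2. Hence the regions Σ₂, Σ₄, Σ₅, Σ₆, Σ₈ (those parts of Σ where at least one of the two coordinates lies in the square S₂) are covered by the spinal sphere S₀ = { (ξ₁,ξ₂,t) : | |ξ₁|²+|ξ₂|²+it | = 2 } and its interior. -/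
open Complex

/-- The closed triangle with vertices `0, 1, i`. -/
def triΔ : Set ℂ := {z : ℂ | 0 ≤ z.re ∧ 0 ≤ z.im ∧ z.re + z.im ≤ 1}

/-- The closed square with vertices `0, 1/2, i/2, (1+i)/2`. -/
def sqS₂ : Set ℂ := {z : ℂ | 0 ≤ z.re ∧ z.re ≤ 1/2 ∧ 0 ≤ z.im ∧ z.im ≤ 1/2}

/-- If one of `ξ₁, ξ₂` lies in the square `S₂` and the other in the triangle
`Δ`, and `−1 ≤ t ≤ 1`, then `| |ξ₁|² + |ξ₂|² + it | < 2`; hence the regions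
`Σ₂, Σ₄, Σ₅, Σ₆, Σ₈` lie inside the spinal sphere `S₀`. -/
theorem sigma_square_inside_spinal_sphere
    (ξ₁ ξ₂ : ℂ) (t : ℝ) (ht : -1 ≤ t ∧ t ≤ 1)
    (h : (ξ₁ ∈ triΔ ∧ ξ₂ ∈ sqS₂) ∨ (ξ₁ ∈ sqS₂ ∧ ξ₂ ∈ triΔ)) :
    ‖((‖ξ₁‖ : ℂ) ^ 2 + (‖ξ₂‖ : ℂ) ^ 2 +
      Complex.I * (t : ℂ))‖ < 2 := by
  obtain ⟨ht1, ht2⟩ := ht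
  have htri : ∀ a : ℂ, a ∈ triΔ → ‖a‖ ^ 2 ≤ 1 := by
    intro a ⟨h1, h2, h3⟩
    rw [Complex.sq_norm, Complex.normSq_apply]
    nlinarith
  have hsq : ∀ a : ℂ, a ∈ sqS₂ → ‖a‖ ^ 2 ≤ 1/2 := by
    intro a ⟨h1, h2, h3, h4⟩
    rw [Complex.sq_norm, Complex.normSq_apply]
    nlinarith
  have hs : ‖ξ₁‖ ^ 2 + ‖ξ₂‖ ^ 2 ≤ 3/2 := by
    rcases h with ⟨h1, h2⟩ | ⟨h1, h2⟩
    · linarith [htri ξ₁ h1, hsq ξ₂ h2]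
    · linarith [hsq ξ₁ h1, htri ξ₂ h2]
  have hs0 : 0 ≤ ‖ξ₁‖ ^ 2 + ‖ξ₂‖ ^ 2 := by positivity
  refine lt_of_pow_lt_pow_left₀ 2 (by norm_num) ?_
  rw [Complex.sq_norm, Complex.normSq_apply, ← Complex.ofReal_pow, ← Complex.ofReal_pow]
  simp only [Complex.add_re, Complex.add_im, Complex.mul_re, Complex.mul_im,
    Complex.I_re, Complex.I_im, Complex.ofReal_re, Complex.ofReal_im]
  ring_nf
  nlinarith
end

section
/- Let ξ₁, ξ₂ ∈ S₃ be complex numbers in the closed triangle with vertices 0, 1, (1+i)/2, and let t ∈ [−1,1] be real. Then either | |ξ₁|² + |ξ₂|² + it | ≤ 2, or there exists k ∈ {0, −1} such that | |ξ₁−1|² + |ξ₂−1|² + i(t + 2k + 2·Im(ξ₁+ξ₂)) | ≤ 2. Hence the region Σ₉ is covered by the closed regions bounded by the spinal sphere S₀, the Heisenberg sphere S₁ of radius √2 centered at ((1,1)ᵀ,0), and its vertical translate T⁻¹(S₁). -/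
open Complex

/-- The closed triangle with vertices `0, 1, (1+i)/2`. -/
def triS₃ : Set ℂ := {z : ℂ | 0 ≤ z.im ∧ z.im ≤ z.re ∧ z.re + z.im ≤ 1}

private lemma abs_le_two_aux (s u : ℝ) (h : s ^ 2 + u ^ 2 ≤ 4) :
    ‖(s : ℂ) + Complex.I * (u : ℂ)‖ ≤ 2 := by
  have h2 : ‖(s : ℂ) + Complex.I * (u : ℂ)‖ ^ 2 = s ^ 2 + u ^ 2 := by
    rw [Complex.sq_norm, Complex.normSq_apply]
    simp
    ring
  nlinarith [norm_nonneg ((s : ℂ) + Complex.I * (u : ℂ))]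

private lemma sq_le_one_aux {u : ℝ} (h1 : -1 ≤ u) (h2 : u ≤ 1) : u ^ 2 ≤ 1 := by
  nlinarith

private lemma tri_bound_aux {x y : ℝ} (hy : 0 ≤ y) (hyx : y ≤ x) (hs : x + y ≤ 1) :
    x ^ 2 + y ^ 2 + ((x - 1) ^ 2 + y ^ 2) ≤ 1 := by
  nlinarith [mul_le_mul hyx (show y ≤ 1 - x by linarith) hy (show (0:ℝ) ≤ x by linarith)]

private lemma smallB_aux {A B t : ℝ} (hAnn : 0 ≤ A) (hBnn : 0 ≤ B)
    (hsum : A + B ≤ 2) (ht2 : t ^ 2 ≤ 1) (hcase : 4 < A ^ 2 + t ^ 2) :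
    B ^ 2 ≤ 1 / 4 := by
  have hA3 : 3 ≤ A ^ 2 := by linarith
  have hA2 : A ≤ 2 := by linarith
  have h1 : (3 : ℝ) / 2 ≤ A := by
    nlinarith [mul_nonneg hAnn (show (0:ℝ) ≤ 2 - A by linarith)]
  have h2 : B ≤ 1 / 2 := by linarith
  nlinarith

private lemma cover_real (x₁ y₁ x₂ y₂ t : ℝ)
    (hy₁ : 0 ≤ y₁) (hyx₁ : y₁ ≤ x₁) (hs₁ : x₁ + y₁ ≤ 1)
    (hy₂ : 0 ≤ y₂) (hyx₂ : y₂ ≤ x₂) (hs₂ : x₂ + y₂ ≤ 1)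
    (ht : -1 ≤ t ∧ t ≤ 1) :
    (x₁ ^ 2 + y₁ ^ 2 + (x₂ ^ 2 + y₂ ^ 2)) ^ 2 + t ^ 2 ≤ 4 ∨
    ((x₁ - 1) ^ 2 + y₁ ^ 2 + ((x₂ - 1) ^ 2 + y₂ ^ 2)) ^ 2
      + (t + 2 * (y₁ + y₂)) ^ 2 ≤ 4 ∨
    ((x₁ - 1) ^ 2 + y₁ ^ 2 + ((x₂ - 1) ^ 2 + y₂ ^ 2)) ^ 2
      + (t - 2 + 2 * (y₁ + y₂)) ^ 2 ≤ 4 := by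
  set A : ℝ := x₁ ^ 2 + y₁ ^ 2 + (x₂ ^ 2 + y₂ ^ 2) with hA
  set B : ℝ := (x₁ - 1) ^ 2 + y₁ ^ 2 + ((x₂ - 1) ^ 2 + y₂ ^ 2) with hB
  clear_value A B
  have hAnn : 0 ≤ A := by rw [hA]; positivity
  have hBnn : 0 ≤ B := by rw [hB]; positivity
  have hsum : A + B ≤ 2 := by
    have h1 := tri_bound_aux hy₁ hyx₁ hs₁
    have h2 := tri_bound_aux hy₂ hyx₂ hs₂
    rw [hA, hB]
    linarith
  by_cases hcase : A ^ 2 + t ^ 2 ≤ 4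
  · exact Or.inl hcase
  · push_neg at hcase
    have hyb₁ : y₁ ≤ 1 / 2 := by linarith
    have hyb₂ : y₂ ≤ 1 / 2 := by linarith
    have ht2 : t ^ 2 ≤ 1 := sq_le_one_aux ht.1 ht.2
    have h3 : B ^ 2 ≤ 1 / 4 := smallB_aux hAnn hBnn hsum ht2 hcase
    by_cases hk : t + 2 * (y₁ + y₂) ≤ 1
    · refine Or.inr (Or.inl ?_)
      have h4 : (t + 2 * (y₁ + y₂)) ^ 2 ≤ 1 :=
        sq_le_one_aux (by linarith [ht.1]) hk
      linarith
    · refine Or.inr (Or.inr ?_)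
      push_neg at hk
      have h4 : (t - 2 + 2 * (y₁ + y₂)) ^ 2 ≤ 1 :=
        sq_le_one_aux (by linarith) (by linarith [ht.2])
      linarith

/-- The region `Σ₉` is covered by the closed regions bounded by the spinal
sphere `S₀`, the Heisenberg sphere `S₁` of radius `√2` centered at
`((1,1)ᵀ,0)`, and its vertical translate `T⁻¹(S₁)`. -/
theorem sigma_nine_covered
    (ξ₁ ξ₂ : ℂ) (hξ₁ : ξ₁ ∈ triS₃) (hξ₂ : ξ₂ ∈ triS₃)
    (t : ℝ) (ht : -1 ≤ t ∧ t ≤ 1) :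
    ‖(‖ξ₁‖ : ℂ) ^ 2 + (‖ξ₂‖ : ℂ) ^ 2 +
      Complex.I * (t : ℂ)‖ ≤ 2 ∨
    ∃ k : ℤ, (k = 0 ∨ k = -1) ∧
      ‖(‖ξ₁ - 1‖ : ℂ) ^ 2 + (‖ξ₂ - 1‖ : ℂ) ^ 2 +
        Complex.I * ((t + 2 * k + 2 * (ξ₁ + ξ₂).im : ℝ) : ℂ)‖ ≤ 2 := by
  obtain ⟨hy₁, hyx₁, hs₁⟩ := hξ₁
  obtain ⟨hy₂, hyx₂, hs₂⟩ := hξ₂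
  have hr₁ : ‖ξ₁‖ ^ 2 = ξ₁.re ^ 2 + ξ₁.im ^ 2 := by
    rw [Complex.sq_norm, Complex.normSq_apply]; ring
  have hr₂ : ‖ξ₂‖ ^ 2 = ξ₂.re ^ 2 + ξ₂.im ^ 2 := by
    rw [Complex.sq_norm, Complex.normSq_apply]; ring
  have hr₁' : ‖ξ₁ - 1‖ ^ 2 = (ξ₁.re - 1) ^ 2 + ξ₁.im ^ 2 := by
    rw [Complex.sq_norm, Complex.normSq_apply]
    simp [Complex.sub_re, Complex.sub_im]
    ring
  have hr₂' : ‖ξ₂ - 1‖ ^ 2 = (ξ₂.re - 1) ^ 2 + ξ₂.im ^ 2 := by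
    rw [Complex.sq_norm, Complex.normSq_apply]
    simp [Complex.sub_re, Complex.sub_im]
    ring
  have him : (ξ₁ + ξ₂).im = ξ₁.im + ξ₂.im := Complex.add_im ξ₁ ξ₂
  rcases cover_real ξ₁.re ξ₁.im ξ₂.re ξ₂.im t hy₁ hyx₁ hs₁ hy₂ hyx₂ hs₂ ht with h | h | h
  · left
    have heq : ((‖ξ₁‖ : ℂ) ^ 2 + (‖ξ₂‖ : ℂ) ^ 2 +
        Complex.I * (t : ℂ))
        = ((ξ₁.re ^ 2 + ξ₁.im ^ 2 + (ξ₂.re ^ 2 + ξ₂.im ^ 2) : ℝ) : ℂ)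
          + Complex.I * (t : ℂ) := by
      rw [← hr₁, ← hr₂]; push_cast; ring
    rw [heq]
    exact abs_le_two_aux _ _ h
  · right
    refine ⟨0, Or.inl rfl, ?_⟩
    have heq : ((‖ξ₁ - 1‖ : ℂ) ^ 2 + (‖ξ₂ - 1‖ : ℂ) ^ 2 +
        Complex.I * ((t + 2 * (0:ℤ) + 2 * (ξ₁ + ξ₂).im : ℝ) : ℂ))
        = (((ξ₁.re - 1) ^ 2 + ξ₁.im ^ 2 + ((ξ₂.re - 1) ^ 2 + ξ₂.im ^ 2) : ℝ) : ℂ)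
          + Complex.I * ((t + 2 * (ξ₁.im + ξ₂.im) : ℝ) : ℂ) := by
      rw [← hr₁', ← hr₂', him]; push_cast; ring
    rw [heq]
    exact abs_le_two_aux _ _ h
  · right
    refine ⟨-1, Or.inr rfl, ?_⟩
    have heq : ((‖ξ₁ - 1‖ : ℂ) ^ 2 + (‖ξ₂ - 1‖ : ℂ) ^ 2 +
        Complex.I * ((t + 2 * (-1:ℤ) + 2 * (ξ₁ + ξ₂).im : ℝ) : ℂ))
        = (((ξ₁.re - 1) ^ 2 + ξ₁.im ^ 2 + ((ξ₂.re - 1) ^ 2 + ξ₂.im ^ 2) : ℝ) : ℂ)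
          + Complex.I * ((t - 2 + 2 * (ξ₁.im + ξ₂.im) : ℝ) : ℂ) := by
      rw [← hr₁', ← hr₂', him]; push_cast; ring
    rw [heq]
    exact abs_le_two_aux _ _ h
end
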